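/- Let h be an odd positive integer and let a be an integer coprime to h. Then the sign of the permutation of ℤ/hℤ given by multiplication by a equals the Jacobi symbol (a/h). -/

import Mathlib

open Equiv Equiv.Perm

lemma sign_mulLeft_of_odd {G : Type*} [Group G] [Fintype G] [DecidableEq G]
    (hodd : Odd (Fintype.card G)) (g : G) : Equiv.Perm.sign (Equiv.mulLeft g) = 1 := by
  have h1 : (Equiv.Perm.sign (Equiv.mulLeft g)) ^ Fintype.card G = 1 := by
    rw [← map_pow, pow_mulLeft, pow_card_eq_one, mulLeft_one, map_one]
  obtain ⟨k, hk⟩ := hodd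
  have h2 : ∀ u : ℤˣ, u ^ (2 * k + 1) = u := by
    intro u; rw [pow_succ, pow_mul]
    rcases Int.units_eq_one_or u with h | h <;> simp [h]
  rw [← h2 (Equiv.Perm.sign (Equiv.mulLeft g)), ← hk, h1]

lemma sign_addLeft_of_odd {A : Type*} [AddCommGroup A] [Fintype A] [DecidableEq A]
    (hodd : Odd (Fintype.card A)) (c : A) (σ : Equiv.Perm A) (hσ : ∀ x, σ x = c + x) :
    Equiv.Perm.sign σ = 1 := by
  have h := sign_mulLeft_of_odd (G := Multiplicative A)
    (by simpa using hodd) (Multiplicative.ofAdd c)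
  rw [Equiv.Perm.sign_eq_sign_of_equiv σ (Equiv.mulLeft (Multiplicative.ofAdd c))
    Multiplicative.ofAdd (fun x => by rw [hσ x]; rfl), h]

def unitPerm {M : Type*} [Monoid M] (u : Mˣ) : Equiv.Perm M where
  toFun x := u * x
  invFun x := (u⁻¹ : Mˣ) * x
  left_inv x := by simp
  right_inv x := by simp

@[simp] lemma unitPerm_apply {M : Type*} [Monoid M] (u : Mˣ) (x : M) :
    unitPerm u x = u * x := rfl


lemma sign_mulLeft_cyclic_even {G : Type*} [Group G] [Fintype G] [DecidableEq G] [IsCyclic G]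
    (heven : Even (Fintype.card G)) (g : G) :
    Equiv.Perm.sign (Equiv.mulLeft g) = if IsSquare g then 1 else -1 := by
  obtain ⟨g₀, hg₀⟩ := IsCyclic.exists_generator (α := G)
  have hord : orderOf g₀ = Fintype.card G := by
    rw [← Nat.card_eq_fintype_card]; exact orderOf_eq_card_of_forall_mem_zpowers hg₀
  have hcard2 : 2 ≤ Fintype.card G := by
    rcases heven with ⟨k, hk⟩
    have := Fintype.card_pos (α := G); omega
  have hg₀ne : g₀ ≠ 1 := by
    intro hh; rw [hh, orderOf_one] at hord; omega
  have hcyc : (Equiv.mulLeft g₀).IsCycle := by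
    refine ⟨1, by simpa using hg₀ne, fun y hy => ?_⟩
    obtain ⟨j, hj⟩ := hg₀ y
    exact ⟨j, by simp [zpow_mulLeft, hj]⟩
  have hsupp : (Equiv.mulLeft g₀).support = Finset.univ := by
    ext x
    simp only [Equiv.Perm.mem_support, Finset.mem_univ, iff_true, Equiv.coe_mulLeft]
    intro hx
    exact hg₀ne (by rwa [mul_eq_right] at hx)
  have hsign₀ : Equiv.Perm.sign (Equiv.mulLeft g₀) = -1 := by
    rw [hcyc.sign, hsupp, Finset.card_univ, heven.neg_one_pow]
  obtain ⟨k, hk⟩ := mem_powers_iff_mem_zpowers.mpr (hg₀ g)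
  simp only at hk
  have hsig : Equiv.Perm.sign (Equiv.mulLeft g) = (-1) ^ k := by
    rw [← hk, ← pow_mulLeft, map_pow, hsign₀]
  rw [hsig]
  by_cases hsq : IsSquare g
  · rw [if_pos hsq]
    obtain ⟨b, hb⟩ := hsq
    obtain ⟨j, hj⟩ := mem_powers_iff_mem_zpowers.mpr (hg₀ b)
    simp only at hj
    have heq : g₀ ^ k = g₀ ^ (2 * j) := by
      rw [hk, hb, ← hj, two_mul, pow_add]
    have hmod : k ≡ 2 * j [MOD orderOf g₀] := pow_eq_pow_iff_modEq.mp heq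
    have h2 : (2 : ℕ) ∣ orderOf g₀ := by rw [hord]; exact heven.two_dvd
    have hmod2 : k ≡ 2 * j [MOD 2] := hmod.of_dvd h2
    have hke : Even k := by
      have : k % 2 = 2 * j % 2 := hmod2
      simp only [Nat.mul_mod_right] at this
      exact Nat.even_iff.mpr this
    rw [hke.neg_one_pow]
  · rw [if_neg hsq]
    have hko : Odd k := by
      rw [← Nat.not_even_iff_odd]
      intro hke
      obtain ⟨j, hj⟩ := hke
      exact hsq ⟨g₀ ^ j, by rw [← hk, hj, pow_add]⟩
    rw [hko.neg_one_pow]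

lemma zolotarev_prime (p : ℕ) [hp : Fact p.Prime] (hpodd : Odd p) (a : ℤ)
    (ha : (a : ZMod p) ≠ 0) (σ : Equiv.Perm (ZMod p)) (hσ : ∀ x, σ x = (a : ZMod p) * x) :
    (Equiv.Perm.sign σ : ℤ) = legendreSym p a := by
  have hinv : ∀ x : ZMod p, x ≠ 0 ↔ σ x ≠ 0 := by
    intro x
    rw [hσ x, mul_ne_zero_iff]
    exact ⟨fun hx => ⟨ha, hx⟩, fun hx => hx.2⟩
  have hinv' : ∀ x : ZMod p, ¬x ≠ 0 ↔ ¬σ x ≠ 0 := fun x => not_iff_not.mpr (hinv x)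
  let ep := σ.subtypePerm (p := fun x => x ≠ 0) (fun x => (hinv x).symm)
  let en := σ.subtypePerm (p := fun x => ¬x ≠ 0) (fun x => (hinv' x).symm)
  have hdecomp : σ = ep.subtypeCongr en := by
    ext x
    by_cases hx : x ≠ 0
    · rw [Equiv.Perm.subtypeCongr.left_apply ep en hx]; rfl
    · rw [Equiv.Perm.subtypeCongr.right_apply ep en hx]; rfl
  haveI : Subsingleton {x : ZMod p // ¬x ≠ 0} :=
    ⟨fun a b => Subtype.ext (by rw [not_not.mp a.2, not_not.mp b.2])⟩
  have hen : Equiv.Perm.sign en = 1 := by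
    have : en = 1 := by ext x; simp [Subsingleton.elim (en x) x]
    rw [this, map_one]
  -- transport ep to the unit group
  have hu : IsUnit (a : ZMod p) := isUnit_iff_ne_zero.mpr ha
  have hep : Equiv.Perm.sign ep = Equiv.Perm.sign (Equiv.mulLeft hu.unit) := by
    refine Equiv.Perm.sign_eq_sign_of_equiv ep (Equiv.mulLeft hu.unit)
      (unitsEquivNeZero (G₀ := ZMod p)).symm (fun x => ?_)
    refine Units.ext ?_
    simp only [unitsEquivNeZero_symm_apply, Equiv.coe_mulLeft, Units.val_mul,
      Units.val_mk0, IsUnit.unit_spec]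
    exact hσ x
  have hcard : Even (Fintype.card (ZMod p)ˣ) := by
    rw [ZMod.card_units_eq_totient, Nat.totient_prime hp.out]
    exact Nat.Odd.sub_odd hpodd odd_one
  have hsq : IsSquare hu.unit ↔ IsSquare (a : ZMod p) := by
    constructor
    · rintro ⟨b, hb⟩
      exact ⟨(b : ZMod p), by rw [← Units.val_mul, ← hb, IsUnit.unit_spec]⟩
    · rintro ⟨x, hx⟩
      have hx0 : x ≠ 0 := by rintro rfl; rw [mul_zero] at hx; exact ha hx
      exact ⟨Units.mk0 x hx0, Units.ext (by rw [IsUnit.unit_spec, hx]; rfl)⟩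
  rw [hdecomp, Equiv.Perm.sign_subtypeCongr, hen, mul_one, hep,
    sign_mulLeft_cyclic_even hcard]
  by_cases hs : IsSquare (a : ZMod p)
  · rw [if_pos (hsq.mpr hs), (legendreSym.eq_one_iff p ha).mpr hs]; rfl
  · rw [if_neg (fun hh => hs (hsq.mp hh)), (legendreSym.eq_neg_one_iff p).mpr hs]; rfl

def fibEquiv (p m : ℕ) [NeZero p] [NeZero m] [NeZero (p * m)] :
    ZMod (p * m) ≃ ZMod m × ZMod p where
  toFun x := (ZMod.castHom (dvd_mul_left m p) (ZMod m) x, ((x.val / m : ℕ) : ZMod p))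
  invFun yz := ((m * (yz.2.val) + yz.1.val : ℕ) : ZMod (p * m))
  left_inv x := by
    have hm : 0 < m := Nat.pos_of_ne_zero (NeZero.ne m)
    have hval : x.val < p * m := ZMod.val_lt x
    have hdiv : x.val / m < p := (Nat.div_lt_iff_lt_mul hm).mpr hval
    show ((m * (((x.val / m : ℕ) : ZMod p)).val +
      ((ZMod.castHom (dvd_mul_left m p) (ZMod m) x)).val : ℕ) : ZMod (p * m)) = x
    have h1 : (((x.val / m : ℕ) : ZMod p)).val = x.val / m := ZMod.val_cast_of_lt hdiv
    have h2 : ((ZMod.castHom (dvd_mul_left m p) (ZMod m) x)).val = x.val % m := by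
      rw [ZMod.castHom_apply, ← ZMod.natCast_val, ZMod.val_natCast]
    rw [h1, h2, Nat.div_add_mod, ZMod.natCast_val, ZMod.cast_id]
  right_inv yz := by
    obtain ⟨y, z⟩ := yz
    have hm : 0 < m := Nat.pos_of_ne_zero (NeZero.ne m)
    have hz : z.val < p := ZMod.val_lt z
    have hy : y.val < m := ZMod.val_lt y
    have hN : m * z.val + y.val < p * m := by
      calc m * z.val + y.val < m * z.val + m := by omega
        _ = m * (z.val + 1) := by ring
        _ ≤ m * p := Nat.mul_le_mul_left m hz
        _ = p * m := mul_comm m p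
    have hval : (((m * z.val + y.val : ℕ) : ZMod (p * m))).val = m * z.val + y.val :=
      ZMod.val_cast_of_lt hN
    refine Prod.ext ?_ ?_
    · show ZMod.castHom (dvd_mul_left m p) (ZMod m) ((m * z.val + y.val : ℕ) : ZMod (p * m)) = y
      rw [map_natCast]
      push_cast
      simp [ZMod.natCast_self, ZMod.natCast_val, ZMod.cast_id]
    · show (((((m * z.val + y.val : ℕ) : ZMod (p * m))).val / m : ℕ) : ZMod p) = z
      rw [hval, Nat.mul_add_div hm, Nat.div_eq_of_lt hy, Nat.add_zero,
        ZMod.natCast_val, ZMod.cast_id]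

lemma step (p m : ℕ) [hp : Fact p.Prime] [NeZero m] (hpodd : Odd p) (hmodd : Odd m)
    (a : ℤ) (hap : (a : ZMod p) ≠ 0)
    (σ : Equiv.Perm (ZMod (p * m))) (hσ : ∀ x, σ x = (a : ZMod (p * m)) * x)
    (τ : Equiv.Perm (ZMod m)) (hτ : ∀ x, τ x = (a : ZMod m) * x) :
    (Equiv.Perm.sign σ : ℤ) = (Equiv.Perm.sign τ : ℤ) * legendreSym p a := by
  haveI : NeZero p := ⟨hp.out.ne_zero⟩
  haveI : NeZero (p * m) := ⟨Nat.mul_ne_zero (NeZero.ne p) (NeZero.ne m)⟩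
  have hm : 0 < m := Nat.pos_of_ne_zero (NeZero.ne m)
  set a' : ℕ := (a : ZMod (p * m)).val with ha'def
  have ha'pm : ((a' : ℕ) : ZMod (p * m)) = (a : ZMod (p * m)) := by
    rw [ha'def, ZMod.natCast_val, ZMod.cast_id]
  have ha'm : ((a' : ℕ) : ZMod m) = (a : ZMod m) := by
    have := congrArg (ZMod.castHom (dvd_mul_left m p) (ZMod m)) ha'pm
    rwa [map_natCast, map_intCast] at this
  have ha'p : ((a' : ℕ) : ZMod p) = (a : ZMod p) := by
    have := congrArg (ZMod.castHom (dvd_mul_right p m) (ZMod p)) ha'pm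
    rwa [map_natCast, map_intCast] at this
  set c : ZMod m → ZMod p := fun y => ((a' * y.val / m : ℕ) : ZMod p) with hcdef
  set f : ZMod m → Equiv.Perm (ZMod p) :=
    fun y => (Equiv.mulLeft₀ (a : ZMod p) hap).trans (Equiv.addLeft (c y)) with hfdef
  have hf : ∀ y z, f y z = c y + (a : ZMod p) * z := fun y z => rfl
  set e := fibEquiv p m with hedef
  set P1 : Equiv.Perm (ZMod m × ZMod p) := Equiv.prodCongrLeft (fun _ : ZMod p => τ)
  set P2 : Equiv.Perm (ZMod m × ZMod p) := Equiv.prodCongrRight f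
  have key : ∀ x, e (σ x) = (P1 * P2) (e x) := by
    intro x
    have hex : e x = (ZMod.castHom (dvd_mul_left m p) (ZMod m) x, ((x.val / m : ℕ) : ZMod p)) := rfl
    have happ : (P1 * P2) (e x) = (τ (e x).1, f (e x).1 (e x).2) := by
      rw [Equiv.Perm.mul_apply]
      rw [hex]
      rw [Equiv.prodCongrRight_apply, Equiv.prodCongrLeft_apply]
    rw [happ]
    refine Prod.ext ?_ ?_
    · show ZMod.castHom (dvd_mul_left m p) (ZMod m) (σ x) = τ (e x).1
      rw [hσ x, map_mul, map_intCast, hτ, hex]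
    · -- second components
      have hσx : σ x = ((a' * x.val : ℕ) : ZMod (p * m)) := by
        rw [hσ x, Nat.cast_mul, ha'pm, ZMod.natCast_val, ZMod.cast_id]
      show (((σ x).val / m : ℕ) : ZMod p) = f (e x).1 (e x).2
      have hyval : ((e x).1).val = x.val % m := by
        rw [hex]
        show ((ZMod.castHom (dvd_mul_left m p) (ZMod m) x)).val = x.val % m
        rw [ZMod.castHom_apply, ← ZMod.natCast_val, ZMod.val_natCast]
      rw [hf, hcdef]
      simp only [hyval]
      have hval : (σ x).val = (a' * x.val) % (p * m) := by rw [hσx, ZMod.val_natCast]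
      have hswap : a' * x.val % (p * m) / m = a' * x.val / m % p := by
        rw [← Nat.mod_mul_right_div_self, mul_comm m p]
      rw [hval, hswap, ZMod.natCast_mod]
      have hnat : a' * x.val / m = a' * (x.val / m) + a' * (x.val % m) / m := by
        conv_lhs => rw [← Nat.div_add_mod x.val m]
        rw [show a' * (m * (x.val / m) + x.val % m)
            = m * (a' * (x.val / m)) + a' * (x.val % m) by ring,
          Nat.mul_add_div hm]
      rw [hnat]
      have hzc : (e x).2 = ((x.val / m : ℕ) : ZMod p) := by rw [hex]
      rw [hzc]
      push_cast [ha'p]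
      ring
  have hsgn : Equiv.Perm.sign σ = Equiv.Perm.sign (P1 * P2) :=
    Equiv.Perm.sign_eq_sign_of_equiv σ (P1 * P2) e key
  have hs1 : Equiv.Perm.sign P1 = (Equiv.Perm.sign τ) ^ p := by
    rw [Equiv.Perm.sign_prodCongrLeft]
    simp [ZMod.card]
  have hfy : ∀ y, (Equiv.Perm.sign (f y) : ℤ) = legendreSym p a := by
    intro y
    have : f y = (Equiv.addLeft (c y)) * (Equiv.mulLeft₀ (a : ZMod p) hap) := rfl
    rw [this, map_mul]
    rw [sign_addLeft_of_odd (by rwa [ZMod.card]) (c y) _ (fun x => rfl), one_mul]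
    exact zolotarev_prime p hpodd a hap _ (fun x => rfl)
  have hs2 : (Equiv.Perm.sign P2 : ℤ) = (legendreSym p a) ^ m := by
    rw [Equiv.Perm.sign_prodCongrRight]
    push_cast
    rw [Finset.prod_congr rfl (fun y _ => hfy y), Finset.prod_const, Finset.card_univ, ZMod.card]
  have htp : ((Equiv.Perm.sign τ : ℤˣ) ^ p : ℤˣ) = Equiv.Perm.sign τ := by
    rcases Int.units_eq_one_or (Equiv.Perm.sign τ) with h | h <;>
      simp [h, hpodd.neg_one_pow]
  have hlm : (legendreSym p a) ^ m = legendreSym p a := by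
    rcases legendreSym.eq_one_or_neg_one p hap with h | h <;>
      simp [h, hmodd.neg_one_pow]
  rw [hsgn, map_mul, hs1, htp]
  push_cast
  rw [hs2, hlm]


lemma isUnit_of_isCoprime_int {n : ℕ} (a : ℤ) (h : IsCoprime a (n : ℤ)) :
    IsUnit (a : ZMod n) := by
  obtain ⟨u, v, huv⟩ := h
  have := congrArg (fun z : ℤ => (z : ZMod n)) huv
  push_cast at this
  rw [ZMod.natCast_self, mul_zero, add_zero] at this
  exact IsUnit.of_mul_eq_one _ (by rw [mul_comm]; exact this)

lemma zolotarev_main (h : ℕ) : ∀ (_ : NeZero h), Odd h → ∀ a : ℤ, IsCoprime a (h : ℤ) →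
    ∀ σ : Equiv.Perm (ZMod h), (∀ x, σ x = (a : ZMod h) * x) →
    (Equiv.Perm.sign σ : ℤ) = jacobiSym a h := by
  induction h using Nat.strong_induction_on with
  | _ h IH =>
    intro hne hodd a hcop σ hσ
    haveI := hne
    rcases eq_or_ne h 1 with rfl | h1
    · have hσ1 : σ = 1 := Equiv.ext fun x => Subsingleton.elim _ _
      rw [hσ1, map_one, jacobiSym.one_right]
      rfl
    · have h0 : h ≠ 0 := hne.out
      have hex : ∃ p m, p.Prime ∧ m < h ∧ h = p * m := by
        refine ⟨h.minFac, h / h.minFac, Nat.minFac_prime h1, ?_, ?_⟩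
        · exact Nat.div_lt_self (Nat.pos_of_ne_zero h0) (Nat.minFac_prime h1).one_lt
        · exact (Nat.mul_div_cancel' h.minFac_dvd).symm
      obtain ⟨p, m, hp, hlt, rfl⟩ := hex
      haveI := Fact.mk hp
      have hm0 : m ≠ 0 := by rintro rfl; exact h0 (by simp)
      haveI : NeZero m := ⟨hm0⟩
      haveI : NeZero p := ⟨hp.ne_zero⟩
      obtain ⟨hpodd, hmodd⟩ := Nat.odd_mul.mp hodd
      have hcast : ((p * m : ℕ) : ℤ) = (p : ℤ) * (m : ℤ) := by push_cast; ring
      have hcm : IsCoprime a (m : ℤ) := by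
        rw [hcast] at hcop; exact hcop.of_mul_right_right
      have hcp : IsCoprime a (p : ℤ) := by
        rw [hcast] at hcop; exact hcop.of_mul_right_left
      have hum : IsUnit (a : ZMod m) := isUnit_of_isCoprime_int a hcm
      have hap : (a : ZMod p) ≠ 0 := (isUnit_of_isCoprime_int a hcp).ne_zero
      set tau := unitPerm hum.unit with htaudef
      have htau : ∀ x, tau x = (a : ZMod m) * x := by
        intro x; rw [htaudef, unitPerm_apply, IsUnit.unit_spec]
      have IHm := IH m hlt ⟨hm0⟩ hmodd a hcm tau htau
      have hstep := step p m hpodd hmodd a hap σ hσ tau htau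
      rw [hstep, IHm, jacobiSym.legendreSym.to_jacobiSym, ← jacobiSym.mul_right]
      rw [mul_comm m p]

theorem stmt_17 (h : ℕ) [NeZero h] (hodd : Odd h) (a : ℤ) (hcop : IsCoprime a (h : ℤ))
    (σ : Equiv.Perm (ZMod h)) (hσ : ∀ x : ZMod h, σ x = (a : ZMod h) * x) :
    (Equiv.Perm.sign σ : ℤ) = jacobiSym a h :=
  zolotarev_main h ‹_› hodd a hcop σ hσ
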